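/- For u ∈ Z^n, set ρ_m = m - 1/2, v_m = ρ_m + c·u_m for a fixed constant c = 2(n+k)+1 with n, k positive integers. Then the rational number ξ(u) = Π_{1≤l<m≤n} (v_m² - v_l²)/(ρ_m² - ρ_l²) is always an integer, and ξ(0) = 1. -/

import Mathlib

open Finset Polynomial
open scoped Nat

private lemma descPoch_eval_prod (x : ℚ) (m : ℕ) :
    (descPochhammer ℚ m).eval x = ∏ s ∈ range m, (x - s) := by
  induction m with
  | zero => simp
  | succ m ih =>
    rw [descPochhammer_succ_right, eval_mul, ih, prod_range_succ]
    simp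

private lemma fact_dvd_descPoch (m : ℕ) (t : ℤ) :
    (m ! : ℤ) ∣ (descPochhammer ℤ m).eval t := by
  have key : ∀ s : ℕ, (m ! : ℤ) ∣ (descPochhammer ℤ m).eval (s : ℤ) := by
    intro s
    rw [descPochhammer_eval_eq_descFactorial]
    exact_mod_cast Int.natCast_dvd_natCast.mpr (Nat.factorial_dvd_descFactorial s m)
  rcases le_or_gt 0 t with h | h
  · obtain ⟨s, rfl⟩ := Int.eq_ofNat_of_zero_le h
    exact key s
  · rw [descPochhammer_eval_eq_ascPochhammer,
      show (t - m + 1 : ℤ) = -((m : ℤ) - 1 - t) by ring,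
      ascPochhammer_eval_neg_eq_descPochhammer]
    obtain ⟨s, hs⟩ := Int.eq_ofNat_of_zero_le (show (0:ℤ) ≤ (m : ℤ) - 1 - t by omega)
    rw [hs]
    exact Dvd.dvd.mul_left (key s) _

private lemma prod_pairs_Ioi {n : ℕ} {M : Type*} [CommMonoid M] (f : Fin n → Fin n → M) :
    ∏ p ∈ Finset.univ.filter (fun p : Fin n × Fin n => p.1 < p.2), f p.1 p.2
      = ∏ i : Fin n, ∏ j ∈ Finset.Ioi i, f i j := by
  rw [Finset.prod_sigma']
  exact Finset.prod_nbij' (fun p => ⟨p.1, p.2⟩) (fun x => (x.1, x.2))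
    (by simp) (by simp) (by simp) (by simp) (by simp)

private lemma prod_pairs_Iio {n : ℕ} {M : Type*} [CommMonoid M] (f : Fin n → Fin n → M) :
    ∏ p ∈ Finset.univ.filter (fun p : Fin n × Fin n => p.1 < p.2), f p.1 p.2
      = ∏ j : Fin n, ∏ i ∈ Finset.Iio j, f i j := by
  rw [Finset.prod_sigma']
  exact Finset.prod_nbij' (fun p => ⟨p.2, p.1⟩) (fun x => (x.2, x.1))
    (by simp) (by simp) (by simp) (by simp) (by simp)

private lemma prod_range_asc (a k : ℕ) : ∏ i ∈ range k, (a + i) = a.ascFactorial k := by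
  induction k with
  | zero => simp
  | succ k ih => rw [prod_range_succ, ih, Nat.ascFactorial_succ, Nat.mul_comm]

private lemma colD (m : ℕ) :
    (∏ i ∈ range m, (((m:ℚ) - i) * ((m:ℚ) + i + 1))) = ((2*m)! : ℚ) := by
  have h1 : ∏ i ∈ range m, ((m:ℚ) - i) = (m ! : ℚ) := by
    have e1 : ∏ i ∈ range m, ((m:ℚ) - i) = ∏ i ∈ range m, ((m - i : ℕ) : ℚ) := by
      refine Finset.prod_congr rfl fun i hi => ?_
      rw [Nat.cast_sub (le_of_lt (mem_range.mp hi))]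
    have e2 : ∏ i ∈ range m, (m - i) = m ! := by
      calc ∏ i ∈ range m, (m - i) = ∏ i ∈ range m, ((m - 1 - i) + 1) := by
            refine Finset.prod_congr rfl fun i hi => ?_
            have := mem_range.mp hi; omega
        _ = ∏ i ∈ range m, (i + 1) := Finset.prod_range_reflect (fun i => i + 1) m
        _ = m ! := Finset.prod_range_add_one_eq_factorial m
    rw [e1, ← Nat.cast_prod, e2]
  have h2 : ∏ i ∈ range m, ((m:ℚ) + i + 1) = ((m+1).ascFactorial m : ℚ) := by
    have e1 : ∏ i ∈ range m, ((m:ℚ) + i + 1) = ∏ i ∈ range m, (((m + 1 + i : ℕ)) : ℚ) := by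
      refine Finset.prod_congr rfl fun i _ => ?_
      push_cast; ring
    rw [e1, ← Nat.cast_prod, prod_range_asc]
  rw [Finset.prod_mul_distrib, h1, h2, ← Nat.cast_mul,
    Nat.factorial_mul_ascFactorial, two_mul]

private lemma prod_Iio_fin {n : ℕ} (j : Fin n) (g : ℕ → ℚ) :
    ∏ i ∈ Finset.Iio j, g i.val = ∏ t ∈ range j.val, g t := by
  refine Finset.prod_bij' (fun i _ => i.val) (fun t ht => ⟨t, ?_⟩) ?_ ?_ ?_ ?_ ?_
  · exact lt_trans (mem_range.mp ht) j.isLt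
  · intro i hi; simpa [Finset.mem_range] using (Finset.mem_Iio.mp hi)
  · intro t ht; simpa [Finset.mem_Iio, Fin.lt_def] using mem_range.mp ht
  · intro i hi; rfl
  · intro t ht; rfl
  · intro i hi; rfl

private lemma L1 (x : ℚ) (j : ℕ) :
    ∏ t ∈ range j, ((x - t) * (x + t + 1)) = (descPochhammer ℚ (2*j)).eval (x + j) := by
  have hA : ∏ s ∈ range j, (x + j - s) = ∏ s ∈ range j, (x + s + 1) := by
    calc ∏ s ∈ range j, (x + j - s)
        = ∏ s ∈ range j, (x + ((j - 1 - s : ℕ) : ℚ) + 1) := by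
          refine Finset.prod_congr rfl fun s hs => ?_
          have hsj := mem_range.mp hs
          rw [Nat.cast_sub (by omega), Nat.cast_sub (by omega : (1:ℕ) ≤ j)]
          push_cast; ring
      _ = ∏ s ∈ range j, (x + (s:ℚ) + 1) :=
          Finset.prod_range_reflect (fun s => (x + (s:ℚ) + 1)) j
  have hB : ∏ t ∈ range j, (x + (j:ℚ) - ((j + t : ℕ) : ℚ)) = ∏ t ∈ range j, (x - t) := by
    refine Finset.prod_congr rfl fun t _ => ?_
    push_cast; ring
  rw [descPoch_eval_prod, two_mul, Finset.prod_range_add, hA, hB,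
    Finset.prod_mul_distrib, mul_comm]


/-- for `u ∈ ℤⁿ`, with `ρ_m = m - 1/2` and `v_m = ρ_m + c·u_m`, where
`c = 2(n+k)+1` for positive integers `n, k`, the rational number
`ξ(u) = ∏_{1 ≤ l < m ≤ n} (v_m² - v_l²)/(ρ_m² - ρ_l²)` is an integer, and `ξ(0) = 1`.
(The index `i : Fin n` corresponds to `m = i + 1`.) -/
theorem ξ_is_integer (n k : ℕ) (hn : 0 < n) (hk : 0 < k)
    (c : ℚ) (hc : c = 2 * (n + k) + 1)
    (ρ : Fin n → ℚ) (hρ : ∀ i, ρ i = ((i : ℕ) + 1 : ℚ) - 1 / 2)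
    (v : (Fin n → ℤ) → Fin n → ℚ) (hv : ∀ u i, v u i = ρ i + c * u i)
    (ξ : (Fin n → ℤ) → ℚ)
    (hξ : ∀ u, ξ u = ∏ p ∈ Finset.univ.filter (fun p : Fin n × Fin n => p.1 < p.2),
      ((v u p.2) ^ 2 - (v u p.1) ^ 2) / ((ρ p.2) ^ 2 - (ρ p.1) ^ 2)) :
    (∀ u : Fin n → ℤ, ∃ z : ℤ, ξ u = (z : ℚ)) ∧ ξ 0 = 1 := by
  -- denominators are nonzero
  have hden : ∀ p : Fin n × Fin n, p.1 < p.2 → (ρ p.2) ^ 2 - (ρ p.1) ^ 2 ≠ 0 := by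
    intro p hp
    have he : (ρ p.2) ^ 2 - (ρ p.1) ^ 2
        = ((p.2.val : ℚ) - p.1.val) * ((p.2.val : ℚ) + p.1.val + 1) := by
      rw [hρ, hρ]; ring
    rw [he]
    have h1 : (0:ℚ) < (p.2.val : ℚ) - p.1.val := by
      rw [sub_pos]; exact_mod_cast (Fin.lt_def.mp hp)
    have h2 : (0:ℚ) < (p.2.val : ℚ) + p.1.val + 1 := by positivity
    exact ne_of_gt (mul_pos h1 h2)
  -- the factorial product
  have hfact_ne : (∏ j : Fin n, ((2 * j.val)! : ℚ)) ≠ 0 :=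
    Finset.prod_ne_zero_iff.mpr fun j _ => by
      exact_mod_cast Nat.factorial_ne_zero _
  -- denominator product computation
  have hD : ∏ p ∈ Finset.univ.filter (fun p : Fin n × Fin n => p.1 < p.2),
      ((ρ p.2) ^ 2 - (ρ p.1) ^ 2) = ∏ j : Fin n, ((2 * j.val)! : ℚ) := by
    rw [prod_pairs_Iio (fun i j => (ρ j) ^ 2 - (ρ i) ^ 2)]
    refine Finset.prod_congr rfl fun j _ => ?_
    have e1 : ∏ i ∈ Finset.Iio j, ((ρ j) ^ 2 - (ρ i) ^ 2)
        = ∏ i ∈ Finset.Iio j, (((j.val : ℚ) - i.val) * ((j.val : ℚ) + i.val + 1)) := by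
      refine Finset.prod_congr rfl fun i _ => ?_
      rw [hρ, hρ]; ring
    rw [e1, prod_Iio_fin j (fun t => ((j.val : ℚ) - t) * ((j.val : ℚ) + t + 1)), colD]
  refine ⟨fun u => ?_, ?_⟩
  · -- integrality
    set cz : ℤ := 2 * (n + k) + 1 with hcz
    set T : Fin n → ℤ := fun i => (i.val : ℤ) + cz * u i with hT
    set b : Fin n → Fin n → ℤ := fun i j =>
      (descPochhammer ℤ (2 * j.val)).eval (T i + j.val) / ((2 * j.val)! : ℤ) with hb
    have hbmul : ∀ i j : Fin n, ((2 * j.val)! : ℤ) * b i j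
        = (descPochhammer ℤ (2 * j.val)).eval (T i + j.val) := fun i j =>
      Int.mul_ediv_cancel' (fact_dvd_descPoch _ _)
    set w : Fin n → ℚ := fun i => (v u i) ^ 2 with hw
    set P : Fin n → Polynomial ℚ := fun j =>
      ∏ t ∈ Finset.range j.val, (Polynomial.X - Polynomial.C (((t:ℚ) + 1/2) ^ 2)) with hP
    have hmonic : ∀ j : Fin n, (P j).Monic := fun j =>
      Polynomial.monic_prod_of_monic _ _ fun t _ => Polynomial.monic_X_sub_C _
    have hdeg : ∀ j : Fin n, (P j).natDegree = j.val := by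
      intro j
      rw [hP, Polynomial.natDegree_prod_of_monic _ _ fun t _ => Polynomial.monic_X_sub_C _]
      simp only [Polynomial.natDegree_X_sub_C, Finset.sum_const, Finset.card_range,
        smul_eq_mul, mul_one]
    have hvu : ∀ i : Fin n, v u i = ((T i : ℤ) : ℚ) + 1/2 := by
      intro i
      rw [hv, hρ, hc]
      simp only [hT, hcz]
      push_cast; ring
    have hentry : ∀ i j : Fin n, (P j).eval (w i)
        = ((2 * j.val)! : ℚ) * ((b i j : ℤ) : ℚ) := by
      intro i j
      have e1 : (P j).eval (w i)
          = ∏ t ∈ Finset.range j.val, ((v u i) ^ 2 - ((t:ℚ) + 1/2) ^ 2) := by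
        rw [hP, Polynomial.eval_prod]
        refine Finset.prod_congr rfl fun t _ => ?_
        simp [hw]
      have e2 : ∏ t ∈ Finset.range j.val, ((v u i) ^ 2 - ((t:ℚ) + 1/2) ^ 2)
          = ∏ t ∈ Finset.range j.val,
              ((((T i : ℤ) : ℚ) - t) * (((T i : ℤ) : ℚ) + t + 1)) := by
        refine Finset.prod_congr rfl fun t _ => ?_
        rw [hvu i]; ring
      have e3 : (((T i : ℤ) : ℚ) + (j.val : ℚ)) = (((T i + j.val : ℤ)) : ℚ) := by push_cast; ring
      rw [e1, e2, L1, e3, ← descPochhammer_eval_cast]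
      rw [← hbmul i j]
      push_cast; ring
    refine ⟨(Matrix.of b).det, ?_⟩
    have hN : ∏ p ∈ Finset.univ.filter (fun p : Fin n × Fin n => p.1 < p.2),
        ((v u p.2) ^ 2 - (v u p.1) ^ 2)
        = (∏ j : Fin n, ((2 * j.val)! : ℚ)) * (((Matrix.of b).det : ℤ) : ℚ) := by
      rw [prod_pairs_Ioi (fun i j => w j - w i), ← Matrix.det_vandermonde w,
        Matrix.det_eval_matrixOfPolynomials_eq_det_vandermonde w P hdeg hmonic]
      have e4 : (Matrix.of fun i j => (P j).eval (w i))
          = Matrix.of fun i j => ((2 * j.val)! : ℚ) * (((b i j : ℤ)) : ℚ) := by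
        ext i j; exact hentry i j
      rw [e4, Matrix.det_mul_row (fun j : Fin n => ((2 * j.val)! : ℚ)) (fun i j => ((b i j : ℤ) : ℚ))]
      congr 1
      exact (RingHom.map_det (Int.castRingHom ℚ) (Matrix.of b)).symm
    rw [hξ u, Finset.prod_div_distrib, hN, hD, mul_comm, mul_div_assoc, div_self hfact_ne, mul_one]
  · -- ξ 0 = 1
    rw [hξ 0]
    refine Finset.prod_eq_one fun p hp => ?_
    have hplt : p.1 < p.2 := (Finset.mem_filter.mp hp).2
    have hv0 : ∀ i, v 0 i = ρ i := by
      intro i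
      rw [hv]; simp
    rw [hv0, hv0]
    exact div_self (hden p hplt)
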